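/- Let q ∈ ℂ with |q| < 1, h ∈ ℤ, and for a d-periodic χ : ℕ → ℂ (d odd) define E_{n,χ,q}^{(h,1)}(x) = 2 ∑_{m=0}^∞ χ(m) q^{(h−1)m} (−1)^m [m+x]_q^n (convergent when |q^{h−1}| ≤ 1, e.g. h ≥ 1). Then E_{n,χ,q}^{(h,1)}(x) = (2/(1−q)^n) ∑_{a=0}^{d−1} χ(a)(−1)^a ∑_{l=0}^n C(n,l)(−1)^l q^{l(x+a)+ (h−1)a} / (1 + q^{(h−1)d + ld}). -/

import Mathlib

set_option maxHeartbeats 1000000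


open Filter Finset

/-- Abel summation: `HasAbelSum a S` means `∑ a(m) r^m → S` as `r → 1⁻`. -/
def HasAbelSum (a : ℕ → ℂ) (S : ℂ) : Prop :=
  Tendsto (fun r : ℝ => ∑' m : ℕ, a m * (r : ℂ) ^ m) (nhdsWithin 1 (Set.Iio 1)) (nhds S)

lemma chi_mod (d : ℕ) (χ : ℕ → ℂ) (hχ : ∀ m, χ (m + d) = χ m) (m : ℕ) :
    χ m = χ (m % d) := by
  conv_lhs => rw [← Nat.mod_add_div m d]
  generalize m / d = j
  induction j with
  | zero => simp
  | succ j ih => rw [Nat.mul_succ, ← add_assoc, hχ]; exact ih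

lemma summable_chi (d : ℕ) (hd0 : 0 < d) (χ : ℕ → ℂ) (hχ : ∀ m, χ (m + d) = χ m)
    (z : ℂ) (hz : ‖z‖ < 1) : Summable (fun m => χ m * (-1 : ℂ) ^ m * z ^ m) := by
  refine Summable.of_norm_bounded (g := fun m => (∑ a ∈ range d, ‖χ a‖) * ‖z‖ ^ m)
    ((summable_geometric_of_lt_one (norm_nonneg z) hz).mul_left _) (fun m => ?_)
  rw [norm_mul, norm_mul, norm_pow, norm_pow, norm_neg, norm_one, one_pow, mul_one]
  refine mul_le_mul_of_nonneg_right ?_ (by positivity)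
  rw [chi_mod d χ hχ m]
  exact Finset.single_le_sum (f := fun a => ‖χ a‖) (fun a _ => norm_nonneg _)
    (Finset.mem_range.mpr (Nat.mod_lt m hd0))

lemma tsum_periodic (d : ℕ) (hd : Odd d) (hd0 : 0 < d) (χ : ℕ → ℂ)
    (hχ : ∀ m, χ (m + d) = χ m) (z : ℂ) (hz : ‖z‖ < 1) :
    ∑' m : ℕ, χ m * (-1 : ℂ) ^ m * z ^ m
      = (∑ a ∈ range d, χ a * (-1 : ℂ) ^ a * z ^ a) / (1 + z ^ d) := by
  have : NeZero d := ⟨hd0.ne'⟩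
  have hsum := summable_chi d hd0 χ hχ z hz
  have hzd : ‖(-(z ^ d))‖ < 1 := by
    rw [norm_neg, norm_pow]
    exact pow_lt_one₀ (norm_nonneg z) hz hd0.ne'
  have key : ∀ (j : ℕ) (a : Fin d),
      χ (j * d + (a : ℕ)) * (-1 : ℂ) ^ (j * d + (a : ℕ)) * z ^ (j * d + (a : ℕ))
        = (χ a * (-1 : ℂ) ^ (a : ℕ) * z ^ (a : ℕ)) * (-(z ^ d)) ^ j := by
    intro j a
    have hca : χ (j * d + (a : ℕ)) = χ a := by
      rw [chi_mod d χ hχ, mul_comm, Nat.mul_add_mod, Nat.mod_eq_of_lt a.is_lt]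
    have hodd : (-1 : ℂ) ^ (j * d) = (-1) ^ j := by
      rw [pow_mul', hd.neg_one_pow]
    rw [hca, pow_add, pow_add, hodd, pow_mul']
    ring
  calc ∑' m : ℕ, χ m * (-1 : ℂ) ^ m * z ^ m
      = ∑' (j : ℕ) (a : Fin d), (χ a * (-1 : ℂ) ^ (a : ℕ) * z ^ (a : ℕ)) * (-(z ^ d)) ^ j := by
        have hsum2 : Summable (fun c : ℕ × Fin d =>
            χ ((Nat.divModEquiv d).symm c) * (-1 : ℂ) ^ ((Nat.divModEquiv d).symm c : ℕ)
              * z ^ ((Nat.divModEquiv d).symm c : ℕ)) :=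
          (Equiv.summable_iff (Nat.divModEquiv d).symm).mpr hsum
        rw [← Equiv.tsum_eq (Nat.divModEquiv d).symm, Summable.tsum_prod hsum2]
        refine tsum_congr fun j => tsum_congr fun a => ?_
        simp only [Function.comp, Nat.divModEquiv, Equiv.coe_fn_symm_mk]
        exact key j a
    _ = (∑ a ∈ range d, χ a * (-1 : ℂ) ^ a * z ^ a) / (1 + z ^ d) := by
        have : ∀ j : ℕ, ∑' a : Fin d, (χ a * (-1 : ℂ) ^ (a : ℕ) * z ^ (a : ℕ)) * (-(z ^ d)) ^ j
            = (∑ a ∈ range d, χ a * (-1 : ℂ) ^ a * z ^ a) * (-(z ^ d)) ^ j := by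
          intro j
          rw [tsum_fintype, ← Finset.sum_mul,
            Fin.sum_univ_eq_sum_range (fun a => χ a * (-1 : ℂ) ^ a * z ^ a)]
        rw [tsum_congr this, tsum_mul_left, tsum_geometric_of_norm_lt_one hzd,
          sub_neg_eq_add, div_eq_mul_inv]

lemma one_add_pow_ne (q : ℂ) (hq : ‖q‖ < 1) (j : ℕ) : (1 : ℂ) + q ^ j ≠ 0 := by
  rcases Nat.eq_zero_or_pos j with hj | hj
  · subst hj; norm_num
  · intro H
    have H' : q ^ j = -1 := eq_neg_of_add_eq_zero_right H
    have h1 : ‖q ^ j‖ < 1 := by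
      rw [norm_pow]; exact pow_lt_one₀ (norm_nonneg q) hq hj.ne'
    rw [H'] at h1; simp at h1

/-- The `k = 1` case (equation (22)): for `|q| < 1`, `h ≥ 1`, `d` odd, `χ` `d`-periodic,
`E_{n,χ,q}^{(h,1)}(x) = 2 ∑_m χ(m) q^{(h−1)m} (−1)^m [m+x]_q^n`
Abel-sums to
`(2/(1−q)^n) ∑_{a<d} χ(a)(−1)^a ∑_{l≤n} C(n,l)(−1)^l q^{l(x+a)+(h−1)a}/(1+q^{(h−1)d+ld})`. -/
theorem q_euler_h1_series_eq (q : ℂ) (hq : ‖q‖ < 1) (h : ℕ) (hh : 1 ≤ h)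
    (d : ℕ) (hd : Odd d) (hd0 : 0 < d) (χ : ℕ → ℂ) (hχ : ∀ m, χ (m + d) = χ m) (x n : ℕ) :
    HasAbelSum
      (fun m => 2 * χ m * q ^ ((h - 1) * m) * (-1 : ℂ) ^ m *
        ((1 - q ^ (m + x)) / (1 - q)) ^ n)
      ((2 / (1 - q) ^ n) * ∑ a ∈ Finset.range d, χ a * (-1 : ℂ) ^ a *
        ∑ l ∈ Finset.range (n + 1),
          (n.choose l : ℂ) * (-1 : ℂ) ^ l * q ^ (l * (x + a) + (h - 1) * a) /
            (1 + q ^ ((h - 1) * d + l * d))) := by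
  set c : ℕ → ℂ := fun l => 2 * (n.choose l : ℂ) * (-1 : ℂ) ^ l * q ^ (l * x) / (1 - q) ^ n
    with hc
  set G : ℝ → ℂ := fun r => ∑ l ∈ range (n + 1),
      c l * ((∑ a ∈ range d, χ a * (-1 : ℂ) ^ a * (q ^ (h - 1 + l) * (r : ℂ)) ^ a) /
        (1 + (q ^ (h - 1 + l) * (r : ℂ)) ^ d)) with hG
  set S' : ℂ := ∑ l ∈ range (n + 1),
      c l * ((∑ a ∈ range d, χ a * (-1 : ℂ) ^ a * q ^ ((h - 1 + l) * a)) /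
        (1 + q ^ ((h - 1 + l) * d))) with hS'
  have hqn : ‖q‖ ≤ 1 := hq.le
  -- eventual equality of the Abel sums with G
  have heq : ∀ r ∈ Set.Ioo (0 : ℝ) 1,
      (∑' m : ℕ, (2 * χ m * q ^ ((h - 1) * m) * (-1 : ℂ) ^ m *
        ((1 - q ^ (m + x)) / (1 - q)) ^ n) * (r : ℂ) ^ m) = G r := by
    intro r hr
    have hrn : ‖(r : ℂ)‖ < 1 := by
      rw [Complex.norm_real, Real.norm_eq_abs, abs_of_pos hr.1]; exact hr.2
    have hzl : ∀ l : ℕ, ‖q ^ (h - 1 + l) * (r : ℂ)‖ < 1 := by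
      intro l
      rw [norm_mul, norm_pow]
      calc ‖q‖ ^ (h - 1 + l) * ‖(r : ℂ)‖ ≤ 1 * ‖(r : ℂ)‖ := by
            gcongr; exact pow_le_one₀ (norm_nonneg q) hqn
        _ < 1 := by rwa [one_mul]
    have hb : ∀ m : ℕ, (1 - q ^ (m + x)) ^ n
        = ∑ l ∈ range (n + 1), (-q ^ (m + x)) ^ l * (n.choose l : ℂ) := by
      intro m
      rw [show (1 : ℂ) - q ^ (m + x) = -q ^ (m + x) + 1 by ring, add_pow]
      simp
    have hpt : ∀ m : ℕ, (2 * χ m * q ^ ((h - 1) * m) * (-1 : ℂ) ^ m *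
        ((1 - q ^ (m + x)) / (1 - q)) ^ n) * (r : ℂ) ^ m
        = ∑ l ∈ range (n + 1),
            c l * (χ m * (-1 : ℂ) ^ m * (q ^ (h - 1 + l) * (r : ℂ)) ^ m) := by
      intro m
      rw [div_pow, hb m, Finset.sum_div, Finset.mul_sum, Finset.sum_mul]
      refine Finset.sum_congr rfl fun l _ => ?_
      rw [hc]
      ring
    rw [tsum_congr hpt,
      Summable.tsum_finsetSum (fun l _ => ((summable_chi d hd0 χ hχ _ (hzl l)).mul_left (c l)))]
    refine Finset.sum_congr rfl fun l _ => ?_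
    rw [tsum_mul_left, tsum_periodic d hd hd0 χ hχ _ (hzl l)]
  -- the limit of G
  have hT : Tendsto G (nhds 1) (nhds S') := by
    rw [hG, hS']
    refine tendsto_finset_sum _ fun l _ => ?_
    have hbase : Tendsto (fun r : ℝ => q ^ (h - 1 + l) * (r : ℂ)) (nhds 1)
        (nhds (q ^ (h - 1 + l))) := by
      have := (Complex.continuous_ofReal.tendsto 1).const_mul (q ^ (h - 1 + l))
      simpa using this
    refine Tendsto.const_mul _ (Tendsto.div ?_ ?_ ?_)
    · refine tendsto_finset_sum _ fun a _ => ?_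
      have := (hbase.pow a).const_mul (χ a * (-1 : ℂ) ^ a)
      simpa [mul_assoc, ← pow_mul] using this
    · have := (hbase.pow d).const_add (1 : ℂ)
      simpa [← pow_mul] using this
    · exact one_add_pow_ne q hq _
  -- S' equals the stated value
  have hSS' : S' = (2 / (1 - q) ^ n) * ∑ a ∈ Finset.range d, χ a * (-1 : ℂ) ^ a *
      ∑ l ∈ Finset.range (n + 1),
        (n.choose l : ℂ) * (-1 : ℂ) ^ l * q ^ (l * (x + a) + (h - 1) * a) /
          (1 + q ^ ((h - 1) * d + l * d)) := by
    rw [hS']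
    simp only [Finset.mul_sum, Finset.sum_div]
    rw [Finset.sum_comm]
    refine Finset.sum_congr rfl fun a _ => Finset.sum_congr rfl fun l _ => ?_
    rw [hc]
    rw [show (h - 1) * d + l * d = (h - 1 + l) * d by ring,
      show l * (x + a) + (h - 1) * a = l * x + (h - 1 + l) * a by ring,
      pow_add q (l * x)]
    ring
  unfold HasAbelSum
  rw [← hSS']
  refine Tendsto.congr' ?_ (hT.mono_left nhdsWithin_le_nhds)
  filter_upwards [Ioo_mem_nhdsLT_of_mem (Set.mem_Ioc.mpr ⟨zero_lt_one, le_refl 1⟩)] with r hr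
  exact (heq r hr).symm
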